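/- Let p ∈ (0,1), α ∈ (0,1), and set q = p/(1−p). Then ∑_{k=0}^∞ |k − q|^{1+α} · p^k · (1−p) ≤ 4·(q + q^{1+α}). In other words, if X is a negative binomial (geometric) random variable of parameters (1,p), with mean q, then E[|X − q|^{1+α}] ≤ 4 (q + q^{1+α}). -/

import Mathlib

open Real
open scoped ENNReal

/-- Sum of `(A (k-q)^2 + B k + C) p^k (1-p)` for the geometric distribution. -/
lemma geom_hasSum_aux (p q : ℝ) (hp0 : 0 < p) (hp1 : p < 1) (hq : q = p / (1 - p))
    (A B C : ℝ) :
    HasSum (fun k : ℕ => (A * ((k : ℝ) - q) ^ 2 + B * k + C) * p ^ k * (1 - p))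
      (A * (q + q ^ 2) + B * q + C) := by
  have h1p : (0 : ℝ) < 1 - p := by linarith
  have hnorm : ‖p‖ < 1 := by rw [Real.norm_eq_abs, abs_of_pos hp0]; exact hp1
  have H0 : HasSum (fun k : ℕ => p ^ k) (1 - p)⁻¹ :=
    hasSum_geometric_of_lt_one hp0.le hp1
  have H1 : HasSum (fun k : ℕ => (k : ℝ) * p ^ k) (p / (1 - p) ^ 2) :=
    hasSum_coe_mul_geometric_of_norm_lt_one hnorm
  have Hc : HasSum (fun k : ℕ => ((k + 2).choose 2 : ℝ) * p ^ k) (1 / (1 - p) ^ 3) :=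
    hasSum_choose_mul_geometric_of_norm_lt_one 2 hnorm
  have H2 : HasSum (fun k : ℕ => (k : ℝ) ^ 2 * p ^ k)
      (2 * (1 / (1 - p) ^ 3) - 3 * (p / (1 - p) ^ 2) - 2 * (1 - p)⁻¹) := by
    have := ((Hc.mul_left 2).sub (H1.mul_left 3)).sub (H0.mul_left 2)
    convert this using 2 with k
    · rfl
    have hcast : ((k + 2).choose 2 : ℝ) = ((k : ℝ) + 2) * ((k : ℝ) + 1) / 2 := by
      rw [Nat.cast_choose_two]; push_cast; ring
    rw [hcast]; ring
  have Htot := (((H2.mul_left A).add (H1.mul_left (B - 2 * A * q))).add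
      (H0.mul_left (A * q ^ 2 + C))).mul_right (1 - p)
  convert Htot using 1
  · rfl
  · funext k; ring
  · subst hq; field_simp; ring

theorem geometric_centered_moment_bound (p : ℝ) (hp : p ∈ Set.Ioo (0 : ℝ) 1)
    (α : ℝ) (hα : α ∈ Set.Ioo (0 : ℝ) 1) (q : ℝ) (hq : q = p / (1 - p)) :
    ∑' k : ℕ, ENNReal.ofReal (|(k : ℝ) - q| ^ ((1 : ℝ) + α) * p ^ k * (1 - p)) ≤
      ENNReal.ofReal (4 * (q + q ^ ((1 : ℝ) + α))) := by
  obtain ⟨hp0, hp1⟩ := hp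
  obtain ⟨hα0, hα1⟩ := hα
  have h1p : (0 : ℝ) < 1 - p := by linarith
  have hq0 : 0 < q := by rw [hq]; positivity
  set f : ℕ → ℝ := fun k => |(k : ℝ) - q| ^ ((1 : ℝ) + α) * p ^ k * (1 - p) with hf
  have hf_nonneg : ∀ k, 0 ≤ f k := by
    intro k; apply mul_nonneg (mul_nonneg (Real.rpow_nonneg (abs_nonneg _) _) _) h1p.le
    positivity
  -- choose coefficients according to whether q ≤ 1
  obtain ⟨A, B, C, hbd, hfin⟩ :
      ∃ A B C : ℝ, (∀ k : ℕ, |(k : ℝ) - q| ^ ((1 : ℝ) + α) ≤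
          A * ((k : ℝ) - q) ^ 2 + B * (k : ℝ) + C) ∧
        A * (q + q ^ 2) + B * q + C ≤ 4 * (q + q ^ ((1 : ℝ) + α)) := by
    rcases le_or_gt q 1 with hq1 | hq1
    · refine ⟨1, 2 * q, q - q ^ 2, fun k => ?_, ?_⟩
      · have hgoal : |(k : ℝ) - q| ^ ((1 : ℝ) + α) ≤ q + (k : ℝ) ^ 2 := by
          rcases Nat.eq_zero_or_pos k with rfl | hk
          · simp only [Nat.cast_zero, zero_sub, abs_neg, abs_of_pos hq0]
            have : q ^ ((1 : ℝ) + α) ≤ q ^ (1 : ℝ) :=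
              Real.rpow_le_rpow_of_exponent_ge hq0 hq1 (by linarith)
            rw [Real.rpow_one] at this
            nlinarith
          · have hk1 : (1 : ℝ) ≤ (k : ℝ) := by exact_mod_cast hk
            have habs : |(k : ℝ) - q| ≤ (k : ℝ) := by
              rw [abs_of_nonneg (by linarith)]; linarith
            have h1 : |(k : ℝ) - q| ^ ((1 : ℝ) + α) ≤ (k : ℝ) ^ ((1 : ℝ) + α) :=
              Real.rpow_le_rpow (abs_nonneg _) habs (by linarith)
            have h2 : (k : ℝ) ^ ((1 : ℝ) + α) ≤ (k : ℝ) ^ ((2 : ℕ) : ℝ) :=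
              Real.rpow_le_rpow_of_exponent_le hk1 (by push_cast; linarith)
            rw [Real.rpow_natCast] at h2
            nlinarith
        calc |(k : ℝ) - q| ^ ((1 : ℝ) + α) ≤ q + (k : ℝ) ^ 2 := hgoal
          _ = 1 * ((k : ℝ) - q) ^ 2 + 2 * q * (k : ℝ) + (q - q ^ 2) := by ring
      · have hqsq : q ^ 2 ≤ q := by nlinarith
        have hpow : 0 ≤ q ^ ((1 : ℝ) + α) := Real.rpow_nonneg hq0.le _
        nlinarith
    · refine ⟨q ^ (α - 1), q ^ α, q ^ ((1 : ℝ) + α), fun k => ?_, ?_⟩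
      · set x := |(k : ℝ) - q| with hx
        have hx0 : 0 ≤ x := abs_nonneg _
        have hxkq : x ≤ (k : ℝ) + q := by
          have := abs_sub_abs_le_abs_sub (k : ℝ) q
          have h1 : |(k : ℝ)| = (k : ℝ) := abs_of_nonneg (Nat.cast_nonneg k)
          have h2 : |q| = q := abs_of_pos hq0
          calc x ≤ |(k : ℝ)| + |q| := abs_sub _ _
            _ = (k : ℝ) + q := by rw [h1, h2]
        have hA : (0 : ℝ) ≤ q ^ (α - 1) := Real.rpow_nonneg hq0.le _
        have hB : (0 : ℝ) ≤ q ^ α := Real.rpow_nonneg hq0.le _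
        have key : x ^ ((1 : ℝ) + α) ≤ q ^ (α - 1) * x ^ 2 + q ^ α * x := by
          rcases eq_or_lt_of_le hx0 with h0 | hxpos
          · rw [← h0, Real.zero_rpow (by linarith)]
            positivity
          rcases le_or_gt x q with hxq | hxq
          · have h1 : x ^ ((1 : ℝ) + α) = x ^ α * x := by
              rw [Real.rpow_add hxpos, Real.rpow_one]; ring
            have h2 : x ^ α ≤ q ^ α := Real.rpow_le_rpow hx0 hxq hα0.le
            rw [h1]
            nlinarith [mul_nonneg hA (sq_nonneg x), mul_le_mul_of_nonneg_right h2 hx0]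
          · -- x > q : x^{1+α} ≤ q^{α-1} x²
            have hmul : x ^ ((1 : ℝ) + α) * q ^ ((1 : ℝ) - α) ≤ x ^ 2 := by
              have h1 : q ^ ((1 : ℝ) - α) ≤ x ^ ((1 : ℝ) - α) :=
                Real.rpow_le_rpow hq0.le hxq.le (by linarith)
              have h2 : x ^ ((1 : ℝ) + α) * x ^ ((1 : ℝ) - α) = x ^ 2 := by
                rw [← Real.rpow_add hxpos,
                  show (1 : ℝ) + α + (1 - α) = ((2 : ℕ) : ℝ) by push_cast; ring,
                  Real.rpow_natCast]
              calc x ^ ((1 : ℝ) + α) * q ^ ((1 : ℝ) - α)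
                  ≤ x ^ ((1 : ℝ) + α) * x ^ ((1 : ℝ) - α) :=
                    mul_le_mul_of_nonneg_left h1 (Real.rpow_nonneg hx0 _)
                _ = x ^ 2 := h2
            have hqpow : (0 : ℝ) < q ^ ((1 : ℝ) - α) := Real.rpow_pos_of_pos hq0 _
            have hinv : q ^ (α - 1) = (q ^ ((1 : ℝ) - α))⁻¹ := by
              rw [← Real.rpow_neg hq0.le]
              congr 1; ring
            have : x ^ ((1 : ℝ) + α) ≤ x ^ 2 * (q ^ ((1 : ℝ) - α))⁻¹ := by
              rw [← div_eq_mul_inv, le_div_iff₀ hqpow]; exact hmul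
            calc x ^ ((1 : ℝ) + α) ≤ x ^ 2 * (q ^ ((1 : ℝ) - α))⁻¹ := this
              _ = q ^ (α - 1) * x ^ 2 := by rw [hinv]; ring
              _ ≤ q ^ (α - 1) * x ^ 2 + q ^ α * x := by nlinarith [mul_nonneg hB hx0]
        have hq2 : ((k : ℝ) - q) ^ 2 = x ^ 2 := (sq_abs _).symm
        have he : q ^ α * q = q ^ ((1 : ℝ) + α) := by
          have h := (Real.rpow_add hq0 α 1).symm
          rw [Real.rpow_one] at h
          rw [h]; congr 1; ring
        calc x ^ ((1 : ℝ) + α) ≤ q ^ (α - 1) * x ^ 2 + q ^ α * x := key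
          _ ≤ q ^ (α - 1) * x ^ 2 + q ^ α * ((k : ℝ) + q) := by
              nlinarith [mul_le_mul_of_nonneg_left hxkq hB]
          _ = q ^ (α - 1) * ((k : ℝ) - q) ^ 2 + q ^ α * (k : ℝ) + q ^ α * q := by
              rw [hq2]; ring
          _ = q ^ (α - 1) * ((k : ℝ) - q) ^ 2 + q ^ α * (k : ℝ) + q ^ ((1 : ℝ) + α) := by
              rw [he]
      · -- scalar inequality for q > 1
        have e1 : q ^ (α - 1) * q = q ^ α := by
          have h := (Real.rpow_add hq0 (α - 1) 1).symm
          rw [Real.rpow_one] at h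
          rw [h]; congr 1; ring
        have e2 : q ^ (α - 1) * q ^ 2 = q ^ ((1 : ℝ) + α) := by
          rw [show q ^ 2 = q ^ ((2 : ℕ) : ℝ) from (Real.rpow_natCast q 2).symm,
            ← Real.rpow_add hq0]
          congr 1; push_cast; ring
        have e3 : q ^ α * q = q ^ ((1 : ℝ) + α) := by
          have h := (Real.rpow_add hq0 α 1).symm
          rw [Real.rpow_one] at h
          rw [h]; congr 1; ring
        have h4 : q ^ α ≤ q := by
          have := Real.rpow_le_rpow_of_exponent_le hq1.le hα1.le
          rwa [Real.rpow_one] at this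
        have h5 : 0 ≤ q ^ ((1 : ℝ) + α) := Real.rpow_nonneg hq0.le _
        have expand : q ^ (α - 1) * (q + q ^ 2) + q ^ α * q + q ^ ((1 : ℝ) + α)
            = q ^ α + 3 * q ^ ((1 : ℝ) + α) := by
          rw [mul_add, e1, e2, e3]; ring
        rw [expand]
        linarith
  -- now finish
  have hg := geom_hasSum_aux p q hp0 hp1 hq A B C
  have hfg : ∀ k, f k ≤ (A * ((k : ℝ) - q) ^ 2 + B * k + C) * p ^ k * (1 - p) := by
    intro k
    have hpk : (0 : ℝ) ≤ p ^ k * (1 - p) := by positivity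
    have := mul_le_mul_of_nonneg_right (hbd k) hpk
    calc f k = |(k : ℝ) - q| ^ ((1 : ℝ) + α) * (p ^ k * (1 - p)) := by rw [hf]; ring
      _ ≤ (A * ((k : ℝ) - q) ^ 2 + B * k + C) * (p ^ k * (1 - p)) := this
      _ = (A * ((k : ℝ) - q) ^ 2 + B * k + C) * p ^ k * (1 - p) := by ring
  have hf_sum : Summable f := Summable.of_nonneg_of_le hf_nonneg hfg hg.summable
  have htsum_le : ∑' k, f k ≤ 4 * (q + q ^ ((1 : ℝ) + α)) :=
    le_trans (Summable.tsum_le_tsum hfg hf_sum hg.summable) (by rw [hg.tsum_eq]; exact hfin)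
  calc ∑' k : ℕ, ENNReal.ofReal (f k) = ENNReal.ofReal (∑' k, f k) :=
        (ENNReal.ofReal_tsum_of_nonneg hf_nonneg hf_sum).symm
    _ ≤ ENNReal.ofReal (4 * (q + q ^ ((1 : ℝ) + α))) := ENNReal.ofReal_le_ofReal htsum_le
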